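/- (Bounded-iterate per-round regret, Lemma 9) In the one-dimensional rescaledexp setting with k = √2, p ≤ 2/L, |g_t| ≤ L, and |w_t| ≤ D, the per-round terms satisfy g_t·(w_t − w_{t+1}) ≤ 6·max(D + 1, e^{1/2})·g_t²·η_t, where w_s = −sign(g_{1:s−1})(exp(η_{s−1}|g_{1:s−1}|) − 1) and η_t|g_t| ≤ 1/2. -/

import Mathlib

open Finset

lemma sign_abs_le_one (a : ℝ) : |Real.sign a| ≤ 1 := by
  rcases lt_trichotomy a 0 with h | h | h
  · rw [Real.sign_of_neg h]; norm_num
  · rw [h, Real.sign_zero]; norm_num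
  · rw [Real.sign_of_pos h]; norm_num

lemma exp_sub_one_le (u : ℝ) : Real.exp u - 1 ≤ u * Real.exp u := by
  have h1 := Real.add_one_le_exp (-u)
  have h2 : Real.exp (-u) * Real.exp u = 1 := by
    rw [← Real.exp_add]; simp
  nlinarith [Real.exp_pos u]

lemma exp_diff_le (a b : ℝ) (hab : a ≤ b) :
    Real.exp b - Real.exp a ≤ (b - a) * Real.exp b := by
  have h1 := exp_sub_one_le (b - a)
  have h2 : Real.exp (b - a) * Real.exp a = Real.exp b := by
    rw [← Real.exp_add]; ring_nf
  nlinarith [(Real.exp_pos a).le, mul_le_mul_of_nonneg_right h1 (Real.exp_pos a).le]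

set_option maxHeartbeats 1000000 in
/-- Bounded-iterate per-round regret (Lemma 9), one dimension, k = √2. -/
theorem stmt15 (g : ℕ → ℝ) (p L D : ℝ) (hp : 0 < p) (hL : 0 < L) (hpL : p ≤ 2 / L)
    (t : ℕ) (ht : 1 ≤ t)
    (M η : ℕ → ℝ) (hM0 : M 0 = 0)
    (hM : ∀ s, 1 ≤ s → M s = max (M (s - 1))
      (|∑ r ∈ Icc 1 s, g r| / p - ∑ r ∈ Icc 1 s, g r ^ 2))
    (hη : ∀ s, η s = 1 / (2 * Real.sqrt (M s + ∑ r ∈ Icc 1 s, g r ^ 2)))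
    (w : ℕ → ℝ)
    (hw : ∀ s, 1 ≤ s → w s = -Real.sign (∑ r ∈ Icc 1 (s - 1), g r) *
      (Real.exp (η (s - 1) * |∑ r ∈ Icc 1 (s - 1), g r|) - 1))
    (hgt : |g t| ≤ L) (hwt : |w t| ≤ D) (hhalf : η t * |g t| ≤ 1 / 2) :
    g t * (w t - w (t + 1)) ≤ 6 * max (D + 1) (Real.exp (1 / 2)) * g t ^ 2 * η t := by
  obtain ⟨n, rfl⟩ : ∃ n, t = n + 1 := ⟨t - 1, by omega⟩
  have hw1 : w (n + 1) = -Real.sign (∑ r ∈ Icc 1 n, g r) *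
      (Real.exp (η n * |∑ r ∈ Icc 1 n, g r|) - 1) := by
    have := hw (n + 1) (by omega); simpa using this
  have hw2 : w (n + 1 + 1) = -Real.sign (∑ r ∈ Icc 1 (n + 1), g r) *
      (Real.exp (η (n + 1) * |∑ r ∈ Icc 1 (n + 1), g r|) - 1) := by
    have := hw (n + 2) (by omega); simpa using this
  set A := ∑ r ∈ Icc 1 n, g r with hAdef
  set B := ∑ r ∈ Icc 1 (n + 1), g r with hBdef
  set G := g (n + 1) with hGdef
  have hBA : B = A + G := by
    rw [hBdef, hAdef, hGdef, Finset.sum_Icc_succ_top (by omega : 1 ≤ n + 1)]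
  set Q0 := ∑ r ∈ Icc 1 n, g r ^ 2 with hQ0def
  set Q1 := ∑ r ∈ Icc 1 (n + 1), g r ^ 2 with hQ1def
  have hQsucc : Q1 = Q0 + G ^ 2 := by
    rw [hQ1def, hQ0def, hGdef, Finset.sum_Icc_succ_top (by omega : 1 ≤ n + 1)]
  have hQ0nn : (0:ℝ) ≤ Q0 := Finset.sum_nonneg fun i _ => sq_nonneg _
  have hMnonneg : ∀ s, 0 ≤ M s := by
    intro s
    induction s with
    | zero => simp [hM0]
    | succ k ih =>
      rw [hM (k + 1) (by omega)]
      simp only [Nat.add_sub_cancel]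
      exact le_trans ih (le_max_left _ _)
  set S0 := M n + Q0 with hS0def
  set S1 := M (n + 1) + Q1 with hS1def
  have hS0nn : 0 ≤ S0 := add_nonneg (hMnonneg n) hQ0nn
  have hS1nn : 0 ≤ S1 := add_nonneg (hMnonneg (n + 1)) (by rw [hQsucc]; positivity)
  have hS01 : S0 + G ^ 2 ≤ S1 := by
    have hMn : M n ≤ M (n + 1) := by
      rw [hM (n + 1) (by omega)]; simp only [Nat.add_sub_cancel]
      exact le_max_left _ _
    rw [hS0def, hS1def, hQsucc]; linarith
  have hApdiv : |A| / p ≤ S0 := by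
    rcases Nat.eq_zero_or_pos n with hn | hn
    · subst hn
      have hA0 : A = 0 := by rw [hAdef]; simp
      rw [hA0]; simp; positivity
    · have h1 := hM n hn
      have h2 : |A| / p - Q0 ≤ M n := by rw [h1]; exact le_max_right _ _
      rw [hS0def]; linarith
  have hAp : |A| ≤ p * S0 := by
    rw [div_le_iff₀ hp] at hApdiv; linarith
  have hBpdiv : |B| / p ≤ S1 := by
    have h1 := hM (n + 1) (by omega)
    simp only [Nat.add_sub_cancel] at h1
    have h2 : |B| / p - Q1 ≤ M (n + 1) := by rw [h1]; exact le_max_right _ _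
    rw [hS1def]; linarith
  have hGL : |G| ≤ L := hgt
  have hLp : L * p ≤ 2 := by
    rw [le_div_iff₀ hL] at hpL; linarith
  have hSdiff : p * S1 ≤ p * S0 + 2 * |G| := by
    have h1 := hM (n + 1) (by omega)
    simp only [Nat.add_sub_cancel] at h1
    rw [hS1def, h1]
    rcases max_cases (M n) (|B| / p - Q1) with ⟨he, _⟩ | ⟨he, _⟩
    · rw [he, hQsucc]
      have hg2 : p * G ^ 2 ≤ 2 * |G| := by
        have habs : p * G ^ 2 = p * |G| * |G| := by
          rw [← sq_abs G]; ring
        rw [habs]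
        nlinarith only [mul_nonneg (mul_nonneg hp.le (abs_nonneg G)) (sub_nonneg.mpr hGL),
          mul_nonneg (sub_nonneg.mpr hLp) (abs_nonneg G)]
      rw [hS0def]; linarith only [hg2]
    · rw [he]
      have hb : |B| ≤ |A| + |G| := by rw [hBA]; exact abs_add_le _ _
      have h3 : p * (|B| / p - Q1 + Q1) = |B| := by field_simp; ring
      rw [h3]
      have : |A| ≤ p * S0 := hAp
      linarith [abs_nonneg G]
  clear_value A B G Q0 Q1 S0 S1
  set s0 := Real.sqrt S0 with hs0def
  set s1 := Real.sqrt S1 with hs1def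
  have hs0sq : s0 ^ 2 = S0 := Real.sq_sqrt hS0nn
  have hs1sq : s1 ^ 2 = S1 := Real.sq_sqrt hS1nn
  have hs0nn : 0 ≤ s0 := Real.sqrt_nonneg _
  have hs1nn : 0 ≤ s1 := Real.sqrt_nonneg _
  have hS0le : S0 ≤ S1 := by linarith [hS01, sq_nonneg G]
  have hs01 : s0 ≤ s1 := Real.sqrt_le_sqrt hS0le
  have hη0 : η n = 1 / (2 * s0) := by
    rw [hη n, hs0def, hS0def, hQ0def]
  have hη1 : η (n + 1) = 1 / (2 * s1) := by
    rw [hη (n + 1), hs1def, hS1def, hQ1def]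
  clear_value s0 s1
  have hη0nn : 0 ≤ η n := by rw [hη0]; positivity
  have hη1nn : 0 ≤ η (n + 1) := by rw [hη1]; positivity
  set x := η n * |A| with hxdef
  set y := η (n + 1) * |B| with hydef
  set q := η (n + 1) * |G| with hqdef
  clear_value x y q
  have hq0 : 0 ≤ q := by rw [hqdef]; exact mul_nonneg hη1nn (abs_nonneg G)
  have hx0 : 0 ≤ x := by rw [hxdef]; exact mul_nonneg hη0nn (abs_nonneg A)
  have hy0 : 0 ≤ y := by rw [hydef]; exact mul_nonneg hη1nn (abs_nonneg B)
  have hqh : q ≤ 1 / 2 := hhalf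
  -- Key inequality 1: x ≤ η(n+1) * (|A| + |G|)
  have hK1 : x ≤ η (n + 1) * (|A| + |G|) := by
    rcases eq_or_lt_of_le hS0nn with h0 | h0
    · have hA0 : |A| = 0 := by
        rw [← h0, mul_zero] at hAp
        exact le_antisymm hAp (abs_nonneg A)
      rw [hxdef, hA0, mul_zero]
      exact mul_nonneg hη1nn (by positivity)
    · have hs0pos : 0 < s0 := by rw [hs0def]; exact Real.sqrt_pos.mpr h0
      have hS1pos : 0 < S1 := lt_of_lt_of_le h0 hS0le
      have hs1pos : 0 < s1 := by rw [hs1def]; exact Real.sqrt_pos.mpr hS1pos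
      have key : |A| * s1 ≤ (|A| + |G|) * s0 := by
        have e1 : (s1 - s0) * (s1 + s0) = S1 - S0 := by
          rw [← hs0sq, ← hs1sq]; ring
        have t1 : |A| * (S1 - S0) ≤ (p * S0) * (S1 - S0) :=
          mul_le_mul_of_nonneg_right hAp (by linarith)
        have t2 : S0 * (p * S1) ≤ S0 * (p * S0 + 2 * |G|) :=
          mul_le_mul_of_nonneg_left hSdiff hS0nn
        have e2 : |A| * (S1 - S0) ≤ 2 * |G| * s0 ^ 2 := by
          rw [hs0sq]; linarith only [t1, t2]
        have hmono : |A| * (s1 - s0) * (2 * s0) ≤ |A| * (s1 - s0) * (s1 + s0) :=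
          mul_le_mul_of_nonneg_left (by linarith)
            (mul_nonneg (abs_nonneg _) (by linarith))
        have e3 : |A| * (s1 - s0) * (s1 + s0) = |A| * (S1 - S0) := by
          rw [← e1]; ring
        have e4 : |A| * (s1 - s0) ≤ |G| * s0 := by
          have hcalc : |A| * (s1 - s0) * (2 * s0) ≤ |G| * s0 * (2 * s0) := by
            calc |A| * (s1 - s0) * (2 * s0) ≤ |A| * (s1 - s0) * (s1 + s0) := hmono
            _ = |A| * (S1 - S0) := e3
            _ ≤ 2 * |G| * s0 ^ 2 := e2
            _ = |G| * s0 * (2 * s0) := by ring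
          exact le_of_mul_le_mul_right hcalc (by linarith only [hs0pos])
        linarith only [e4]
      have h2s0 : (0:ℝ) < 2 * s0 := by linarith
      have h2s1 : (0:ℝ) < 2 * s1 := by linarith
      have hdiv : |A| / (2 * s0) ≤ (|A| + |G|) / (2 * s1) := by
        rw [div_le_div_iff₀ h2s0 h2s1]; linarith only [key]
      calc x = |A| / (2 * s0) := by rw [hxdef, hη0]; ring
      _ ≤ (|A| + |G|) / (2 * s1) := hdiv
      _ = η (n + 1) * (|A| + |G|) := by rw [hη1]; ring
  have hABG : |A| ≤ |B| + |G| := by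
    have : A = B - G := by rw [hBA]; ring
    calc |A| = |B - G| := by rw [this]
    _ ≤ |B| + |G| := abs_sub _ _
  have hBAG : |B| ≤ |A| + |G| := by rw [hBA]; exact abs_add_le _ _
  have hxy : x ≤ y + 2 * q := by
    have h1 : η (n + 1) * (|A| + |G|) ≤ η (n + 1) * (|B| + 2 * |G|) :=
      mul_le_mul_of_nonneg_left (by linarith) hη1nn
    calc x ≤ η (n + 1) * (|A| + |G|) := hK1
    _ ≤ η (n + 1) * (|B| + 2 * |G|) := h1
    _ = y + 2 * q := by rw [hydef, hqdef]; ring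
  have hyx : y ≤ x + 2 * q := by
    have h1 : η (n + 1) * |A| ≤ x := by
      rcases eq_or_ne A 0 with hA0 | hA0
      · rw [hxdef, hA0]; simp
      · have hApos : 0 < |A| := abs_pos.mpr hA0
        have hS0pos : 0 < S0 := by
          have hps : 0 < p * S0 := lt_of_lt_of_le hApos hAp
          rcases mul_pos_iff.mp hps with ⟨_, h⟩ | ⟨h, _⟩
          · exact h
          · linarith only [h, hp]
        have hs0pos : 0 < s0 := by rw [hs0def]; exact Real.sqrt_pos.mpr hS0pos
        have hs1pos : 0 < s1 := lt_of_lt_of_le hs0pos hs01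
        have hmon : η (n + 1) ≤ η n := by
          rw [hη0, hη1]
          apply one_div_le_one_div_of_le (by positivity) (by linarith)
        rw [hxdef]; exact mul_le_mul_of_nonneg_right hmon (abs_nonneg _)
    calc y ≤ η (n + 1) * (|A| + |G|) := by
          rw [hydef]; exact mul_le_mul_of_nonneg_left hBAG hη1nn
    _ = η (n + 1) * |A| + q := by rw [hqdef]; ring
    _ ≤ x + 2 * q := by linarith
  -- D bound
  have hD0 : 0 ≤ D := le_trans (abs_nonneg _) hwt
  have hex1 : 1 ≤ Real.exp x := Real.one_le_exp hx0
  have hey1 : 1 ≤ Real.exp y := Real.one_le_exp hy0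
  have hxD : Real.exp x ≤ D + 1 := by
    rcases eq_or_ne A 0 with hA0 | hA0
    · rw [hxdef, hA0]; simp; linarith
    · have hsgn : |Real.sign A| = 1 := by
        rcases lt_trichotomy A 0 with h | h | h
        · rw [Real.sign_of_neg h]; norm_num
        · exact absurd h hA0
        · rw [Real.sign_of_pos h]; norm_num
      have hwval : |w (n + 1)| = Real.exp x - 1 := by
        rw [hw1, abs_mul, abs_neg, hsgn, one_mul,
          abs_of_nonneg (by linarith : (0:ℝ) ≤ Real.exp x - 1)]
      linarith [hwt, hwval.le, hwval.ge]
  set K := max (D + 1) (Real.exp (1 / 2 : ℝ)) with hKdef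
  have hK1' : (1:ℝ) ≤ K := le_trans (Real.one_le_exp (by norm_num)) (le_max_right _ _)
  have hxK : Real.exp x ≤ K := le_trans hxD (le_max_left _ _)
  have heK : Real.exp (1 / 2 : ℝ) ≤ K := le_max_right _ _
  rcases le_or_gt (A * B) 0 with hop | hsame
  · -- opposite signs: |A| ≤ |G|, |B| ≤ |G|
    have hGle := le_abs_self G
    have hGge := neg_abs_le G
    have hGnn := abs_nonneg G
    have hG' : G = B - A := by rw [hBA]; ring
    have hAle : |A| ≤ |G| := by
      rcases mul_nonpos_iff.mp hop with ⟨h1, h2⟩ | ⟨h1, h2⟩ <;>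
        rw [abs_le] <;> constructor <;> linarith
    have hBle : |B| ≤ |G| := by
      rcases mul_nonpos_iff.mp hop with ⟨h1, h2⟩ | ⟨h1, h2⟩ <;>
        rw [abs_le] <;> constructor <;> linarith
    have hyq : y ≤ q := by
      rw [hydef, hqdef]; exact mul_le_mul_of_nonneg_left hBle hη1nn
    have hxq : x ≤ 3 * q := by linarith
    have hey : Real.exp y - 1 ≤ q * K := by
      have h1 : Real.exp y ≤ Real.exp (1 / 2 : ℝ) := Real.exp_le_exp.mpr (by linarith)
      have h2 := exp_sub_one_le y
      have h3 : y * Real.exp y ≤ q * K :=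
        mul_le_mul hyq (le_trans h1 heK) (Real.exp_pos y).le hq0
      linarith
    have hex : Real.exp x - 1 ≤ 3 * q * K := by
      have h2 := exp_sub_one_le x
      have h3 : x * Real.exp x ≤ (3 * q) * K :=
        mul_le_mul hxq hxK (Real.exp_pos x).le (by linarith)
      linarith
    have hwa : |w (n + 1)| ≤ Real.exp x - 1 := by
      rw [hw1, abs_mul, abs_neg,
        abs_of_nonneg (by linarith : (0:ℝ) ≤ Real.exp x - 1)]
      exact mul_le_of_le_one_left (by linarith) (sign_abs_le_one A)
    have hwb : |w (n + 1 + 1)| ≤ Real.exp y - 1 := by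
      rw [hw2, abs_mul, abs_neg,
        abs_of_nonneg (by linarith : (0:ℝ) ≤ Real.exp y - 1)]
      exact mul_le_of_le_one_left (by linarith) (sign_abs_le_one B)
    calc G * (w (n + 1) - w (n + 1 + 1))
        ≤ |G * (w (n + 1) - w (n + 1 + 1))| := le_abs_self _
    _ = |G| * |w (n + 1) - w (n + 1 + 1)| := abs_mul _ _
    _ ≤ |G| * (|w (n + 1)| + |w (n + 1 + 1)|) :=
        mul_le_mul_of_nonneg_left (abs_sub _ _) (abs_nonneg _)
    _ ≤ |G| * (4 * q * K) :=
        mul_le_mul_of_nonneg_left (by linarith) (abs_nonneg _)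
    _ = 4 * K * |G| ^ 2 * η (n + 1) := by rw [hqdef]; ring
    _ = 4 * K * G ^ 2 * η (n + 1) := by rw [sq_abs]
    _ ≤ 6 * K * G ^ 2 * η (n + 1) := by
        linarith only [mul_nonneg (mul_nonneg (by linarith only [hK1'] : (0:ℝ) ≤ K) (sq_nonneg G)) hη1nn]
  · -- same sign
    have hxyabs : |x - y| ≤ 2 * q := abs_sub_le_iff.mpr ⟨by linarith, by linarith⟩
    have hmain : |G| * |Real.exp y - Real.exp x| ≤ 6 * K * G ^ 2 * η (n + 1) := by
      have hbound : |Real.exp y - Real.exp x| ≤ 2 * q * (3 * K) := by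
        rcases le_total x y with hle | hle
        · have hmon : Real.exp x ≤ Real.exp y := Real.exp_le_exp.mpr hle
          rw [abs_of_nonneg (by linarith)]
          have hd := exp_diff_le x y hle
          have heyK : Real.exp y ≤ 3 * K := by
            have h1 : Real.exp y ≤ Real.exp (x + 2 * q) := Real.exp_le_exp.mpr (by linarith)
            have h2 : Real.exp (x + 2 * q) = Real.exp x * Real.exp (2 * q) := Real.exp_add x (2 * q)
            have h3 : Real.exp (2 * q) ≤ Real.exp 1 := Real.exp_le_exp.mpr (by linarith)
            have h4 : Real.exp 1 < 3 := by
              have := Real.exp_one_lt_d9; linarith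
            calc Real.exp y ≤ Real.exp (x + 2 * q) := h1
            _ = Real.exp x * Real.exp (2 * q) := h2
            _ ≤ K * 3 := mul_le_mul hxK (le_trans h3 h4.le) (Real.exp_pos _).le
                (le_trans zero_le_one hK1')
            _ = 3 * K := by ring
          have h5 : (y - x) * Real.exp y ≤ (2 * q) * (3 * K) :=
            mul_le_mul (by linarith [abs_sub_le_iff.mp hxyabs]) heyK (Real.exp_pos y).le (by linarith)
          linarith
        · have hmon : Real.exp y ≤ Real.exp x := Real.exp_le_exp.mpr hle
          rw [abs_of_nonpos (by linarith), neg_sub]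
          have hd := exp_diff_le y x hle
          have h5 : (x - y) * Real.exp x ≤ (2 * q) * K :=
            mul_le_mul (by linarith [abs_sub_le_iff.mp hxyabs]) hxK (Real.exp_pos x).le (by linarith)
          linarith only [hd, h5, mul_nonneg hq0 (le_trans zero_le_one hK1')]
      calc |G| * |Real.exp y - Real.exp x| ≤ |G| * (2 * q * (3 * K)) :=
          mul_le_mul_of_nonneg_left hbound (abs_nonneg _)
      _ = 6 * K * |G| ^ 2 * η (n + 1) := by rw [hqdef]; ring
      _ = 6 * K * G ^ 2 * η (n + 1) := by rw [sq_abs]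
    rcases mul_pos_iff.mp hsame with ⟨hA, hB⟩ | ⟨hA, hB⟩
    · rw [hw1, hw2, Real.sign_of_pos hA, Real.sign_of_pos hB]
      calc G * (-1 * (Real.exp x - 1) - -1 * (Real.exp y - 1))
          = G * (Real.exp y - Real.exp x) := by ring
      _ ≤ |G * (Real.exp y - Real.exp x)| := le_abs_self _
      _ = |G| * |Real.exp y - Real.exp x| := abs_mul _ _
      _ ≤ 6 * K * G ^ 2 * η (n + 1) := hmain
    · rw [hw1, hw2, Real.sign_of_neg hA, Real.sign_of_neg hB]
      calc G * (- -1 * (Real.exp x - 1) - - -1 * (Real.exp y - 1))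
          = G * (Real.exp x - Real.exp y) := by ring
      _ ≤ |G * (Real.exp x - Real.exp y)| := le_abs_self _
      _ = |G| * |Real.exp x - Real.exp y| := abs_mul _ _
      _ = |G| * |Real.exp y - Real.exp x| := by rw [abs_sub_comm]
      _ ≤ 6 * K * G ^ 2 * η (n + 1) := hmain
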